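/- Let (Ω, 𝓕, μₚ) be a probability space, W : Ω → ℝ a nonnegative measurable function with ∫ W dμₚ = 1 and W bounded, μₜ = μₚ.withDensity W, and R : Ω → ℝ measurable and bounded. Let Z : ℕ → Ω' → Ω be an i.i.d. sequence on a probability space (Ω', μ') with common law μₚ. Then almost surely under μ', the normalised importance sampling ratio converges to the expected reward under the test policy: (∑_{i < n} W(Z_i) · R(Z_i)) / (∑_{i < n} W(Z_i)) → ∫ R dμₜ as n → ∞. (Consistency of the normalised importance sampling (NIS) estimator.) -/

import Mathlib

open MeasureTheory Filter

/-- Consistency of the normalised importance sampling (NIS) estimator: along an i.i.d.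
sequence with common law `μₚ`, the ratio of the empirical mean of `W·R` to the empirical
mean of `W` converges almost surely to the expected reward under the test policy
`μₜ = μₚ.withDensity W`. -/
theorem nis_consistent
    {Ω Ω' : Type*} [MeasurableSpace Ω] [MeasurableSpace Ω']
    (μₚ : Measure Ω) [IsProbabilityMeasure μₚ]
    (W : Ω → ℝ) (hW_meas : Measurable W) (hW_nonneg : ∀ ω, 0 ≤ W ω)
    (hW_int : ∫ ω, W ω ∂μₚ = 1) (CW : ℝ) (hW_bdd : ∀ ω, W ω ≤ CW)
    (μₜ : Measure Ω) (hμₜ : μₜ = μₚ.withDensity (fun ω => ENNReal.ofReal (W ω)))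
    (R : Ω → ℝ) (hR_meas : Measurable R) (CR : ℝ) (hR_bdd : ∀ ω, |R ω| ≤ CR)
    (μ' : Measure Ω') [IsProbabilityMeasure μ']
    (Z : ℕ → Ω' → Ω) (hZ_meas : ∀ i, Measurable (Z i))
    (hZ_indep : ProbabilityTheory.iIndepFun (m := fun _ => ‹MeasurableSpace Ω›) Z μ')
    (hZ_law : ∀ i, Measure.map (Z i) μ' = μₚ) :
    ∀ᵐ ω' ∂μ', Tendsto
      (fun n : ℕ =>
        (∑ i ∈ Finset.range n, W (Z i ω') * R (Z i ω')) /
        (∑ i ∈ Finset.range n, W (Z i ω')))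
      atTop (nhds (∫ ω, R ω ∂μₜ)) := by
  classical
  -- Identical distribution of the Z i
  have hident : ∀ i, ProbabilityTheory.IdentDistrib (Z i) (Z 0) μ' μ' := fun i =>
    ⟨(hZ_meas i).aemeasurable, (hZ_meas 0).aemeasurable, by rw [hZ_law i, hZ_law 0]⟩
  -- bounds
  have hWf_bdd : ∀ ω, |W ω| ≤ CW := fun ω => by
    rw [abs_of_nonneg (hW_nonneg ω)]; exact hW_bdd ω
  have hWR_bdd : ∀ ω, |W ω * R ω| ≤ CW * CR := fun ω => by
    rw [abs_mul]
    exact mul_le_mul (hWf_bdd ω) (hR_bdd ω) (abs_nonneg _)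
      (le_trans (abs_nonneg _) (hWf_bdd ω))
  -- SLLN for a composed bounded function
  have key : ∀ (f : Ω → ℝ), Measurable f → ∀ (C : ℝ), (∀ ω, |f ω| ≤ C) →
      ∀ᵐ ω' ∂μ', Tendsto (fun n : ℕ => (∑ i ∈ Finset.range n, f (Z i ω')) / n)
        atTop (nhds (∫ ω, f ω ∂μₚ)) := by
    intro f hf C hC
    have hint0 : Integrable (f ∘ Z 0) μ' := by
      refine ⟨(hf.comp (hZ_meas 0)).aestronglyMeasurable, ?_⟩
      exact (HasFiniteIntegral.of_bounded (C := C)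
        (Filter.Eventually.of_forall fun ω' => by
          simpa [Real.norm_eq_abs] using hC (Z 0 ω')))
    have hindep : Pairwise (Function.onFun (ProbabilityTheory.IndepFun · · μ') (fun i => f ∘ Z i)) := by
      intro i j hij
      exact (hZ_indep.indepFun hij).comp hf hf
    have hid : ∀ i, ProbabilityTheory.IdentDistrib (f ∘ Z i) (f ∘ Z 0) μ' μ' := fun i =>
      (hident i).comp hf
    have := ProbabilityTheory.strong_law_ae_real (fun i => f ∘ Z i) hint0 hindep hid
    have heq : ∫ ω', (f ∘ Z 0) ω' ∂μ' = ∫ ω, f ω ∂μₚ := by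
      rw [← hZ_law 0, integral_map (hZ_meas 0).aemeasurable hf.aestronglyMeasurable]
      rfl
    rw [heq] at this
    exact this
  have hA := key (fun ω => W ω * R ω) (hW_meas.mul hR_meas) (CW * CR) hWR_bdd
  have hB := key W hW_meas CW hWf_bdd
  -- Identify the limit with ∫ R dμₜ
  have hlim : ∫ ω, W ω * R ω ∂μₚ = ∫ ω, R ω ∂μₜ := by
    rw [hμₜ]
    have h2 : (fun ω => ENNReal.ofReal (W ω)) = fun ω => ((Real.toNNReal (W ω) : NNReal) : ENNReal) := rfl
    rw [h2, integral_withDensity_eq_integral_smul (hW_meas.real_toNNReal) R]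
    congr 1
    ext ω
    simp [NNReal.smul_def, Real.coe_toNNReal _ (hW_nonneg ω)]
  rw [hlim] at hA
  rw [hW_int] at hB
  filter_upwards [hA, hB] with ω' hA hB
  have hdiv : Tendsto (fun n : ℕ =>
      ((∑ i ∈ Finset.range n, W (Z i ω') * R (Z i ω')) / n) /
      ((∑ i ∈ Finset.range n, W (Z i ω')) / n)) atTop (nhds (∫ ω, R ω ∂μₜ)) := by
    have := hA.div hB one_ne_zero
    simpa [Pi.div_def] using this
  refine hdiv.congr' ?_
  filter_upwards [eventually_ge_atTop 1] with n hn
  have hn' : (n : ℝ) ≠ 0 := Nat.cast_ne_zero.mpr (by omega)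
  rw [div_div_div_cancel_right₀ hn']
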